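/- Let b be a random vector taking values in Δ_C such that for every i ∈ {1,…,C} and every ε > 0, P(b_i ≥ 1 − ε) > 0. Then the C×C matrix E[b b'] is symmetric positive definite. -/

import Mathlib

open MeasureTheory ProbabilityTheory Filter Finset
open scoped ENNReal NNReal BigOperators

noncomputable section

namespace GBQL

/-- The probability simplex Δ_C in ℝ^C. -/
def simplex (C : ℕ) : Set (Fin C → ℝ) :=
  {x | (∀ i, 0 ≤ x i) ∧ ∑ i, x i = 1}

/-- A C×C matrix (as a function) is row-stochastic. -/
def rowStochastic {C : ℕ} (M : Fin C → Fin C → ℝ) : Prop :=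
  (∀ i j, 0 ≤ M i j) ∧ ∀ i, ∑ j, M i j = 1

/-- M' x, the transpose of M applied to x : (M'x)_j = Σ_i M_{ij} x_i. -/
def mtv {C : ℕ} (M : Fin C → Fin C → ℝ) (x : Fin C → ℝ) : Fin C → ℝ :=
  fun j => ∑ i, M i j * x i

open scoped Classical in
/-- Kullback–Leibler divergence D_KL(p‖q) = Σ_j p_j log(p_j/q_j) as an element of [0,∞],
with conventions 0·log(0/x) = 0 and p_j log(p_j/0) = ∞ for p_j > 0. -/
def klDiv {C : ℕ} (p q : Fin C → ℝ) : ℝ≥0∞ :=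
  if ∃ j, 0 < p j ∧ q j = 0 then ⊤
  else ENNReal.ofReal (∑ j, if p j = 0 then 0 else p j * Real.log (p j / q j))

/-- Real-valued Kullback–Leibler divergence (agreeing with `klDiv` whenever `q` has
strictly positive entries). -/
def klReal {C : ℕ} (p q : Fin C → ℝ) : ℝ :=
  ∑ j, if p j = 0 then 0 else p j * Real.log (p j / q j)

/-- Completion of a C×(C−1) matrix M̃ to a C×C matrix M with M_{iC} = 1 − Σ_{j<C} M_{ij}. -/
def completeM {c : ℕ} (Mt : Fin (c+1) → Fin c → ℝ) : Fin (c+1) → Fin (c+1) → ℝ :=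
  fun i j => if h : (j : ℕ) < c then Mt i ⟨j, h⟩ else 1 - ∑ k, Mt i k

/-- Completion of p̃ ∈ ℝ^{C−1} to p ∈ ℝ^C with p_C = 1 − Σ_{i<C} p_i. -/
def completeV {c : ℕ} (pt : Fin c → ℝ) : Fin (c+1) → ℝ :=
  fun i => if h : (i : ℕ) < c then pt ⟨i, h⟩ else 1 - ∑ k, pt k

/-- The first C−1 columns of a C×C matrix. -/
def truncM {c : ℕ} (M : Fin (c+1) → Fin (c+1) → ℝ) : Fin (c+1) → Fin c → ℝ :=
  fun i j => M i (Fin.castSucc j)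

/-- The first C−1 coordinates of a vector in ℝ^C. -/
def truncV {c : ℕ} (p : Fin (c+1) → ℝ) : Fin c → ℝ := fun i => p (Fin.castSucc i)

/-- The parameter space: θ = (M̃, p̃). -/
abbrev Param (c : ℕ) := (Fin (c+1) → Fin c → ℝ) × (Fin c → ℝ)

/-- S_d = {x ∈ ℝ^d : x_i ≥ 0, Σ_i x_i ≤ 1}. -/
def Sset (d : ℕ) : Set (Fin d → ℝ) := {x | (∀ i, 0 ≤ x i) ∧ ∑ i, x i ≤ 1}

/-- Θ = (S_{C−1})^C × S_{C−1}. -/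
def Theta (c : ℕ) : Set (Param c) := {θ | (∀ i, θ.1 i ∈ Sset c) ∧ θ.2 ∈ Sset c}

/-- ℓ1 distance on the concatenated coordinates of θ. -/
def l1dist {c : ℕ} (θ θ' : Param c) : ℝ :=
  (∑ i, ∑ j, |θ.1 i j - θ'.1 i j|) + ∑ i, |θ.2 i - θ'.2 i|

/-- The empirical loss f_N(θ), valued in [0,∞]. -/
def fN {c : ℕ} (N n : ℕ) (aU aL bL : ℕ → Fin (c+1) → ℝ) (θ : Param c) : ℝ≥0∞ :=
  ((∑ r ∈ Finset.range N, klDiv (aU r) (mtv (completeM θ.1) (completeV θ.2))) +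
    ∑ r ∈ Finset.range n, klDiv (aL r) (mtv (completeM θ.1) (bL r))) / (N : ℝ≥0∞)

/-- The empirical loss f_N(θ), real-valued version (valid near interior points). -/
def fNreal {c : ℕ} (N n : ℕ) (aU aL bL : ℕ → Fin (c+1) → ℝ) (θ : Param c) : ℝ :=
  ((∑ r ∈ Finset.range N, klReal (aU r) (mtv (completeM θ.1) (completeV θ.2))) +
    ∑ r ∈ Finset.range n, klReal (aL r) (mtv (completeM θ.1) (bL r))) / (N : ℝ)

/-- exp(−x) for x ∈ [0,∞], with exp(−∞) = 0. -/
def expNeg (x : ℝ≥0∞) : ℝ≥0∞ :=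
  if x = ⊤ then 0 else ENNReal.ofReal (Real.exp (-x.toReal))

/-- The extended logarithm [0,∞] → [−∞,∞]. -/
def elog (x : ℝ≥0∞) : EReal :=
  if x = 0 then ⊥ else if x = ⊤ then ⊤ else ((Real.log x.toReal : ℝ) : EReal)

/-- Index set for the coordinates of θ = (M̃, p̃): pairs (i,j) for M̃ entries and i for p̃. -/
abbrev Idx (c : ℕ) := (Fin (c+1) × Fin c) ⊕ Fin c

/-- Coordinates of θ as a vector indexed by `Idx c`. -/
def vecParam {c : ℕ} (θ : Param c) : Idx c → ℝ :=
  Sum.elim (fun ij => θ.1 ij.1 ij.2) (fun i => θ.2 i)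

/-- Standard basis vectors of the parameter space, indexed by `Idx c`. -/
def basisP (c : ℕ) : Idx c → Param c :=
  Sum.elim (fun ij => (fun i j => if i = ij.1 ∧ j = ij.2 then 1 else 0, 0))
    (fun i0 => (0, fun i => if i = i0 then 1 else 0))

/-- if b is a Δ_C-valued random vector with P(b_i ≥ 1−ε) > 0 for every i and
ε > 0, then E[b b'] is symmetric positive definite. -/
theorem stmt2 {Ωs : Type*} [MeasurableSpace Ωs] (μ : Measure Ωs) [IsProbabilityMeasure μ]
    {C : ℕ} (hC : 2 ≤ C)
    (b : Ωs → Fin C → ℝ) (hb_meas : Measurable b)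
    (hb_simplex : ∀ ω, b ω ∈ simplex C)
    (hpos : ∀ i : Fin C, ∀ ε > (0 : ℝ), 0 < μ {ω | 1 - ε ≤ b ω i}) :
    (Matrix.of fun i i' : Fin C => ∫ ω, b ω i * b ω i' ∂μ).PosDef := by
  have hbm : ∀ i, Measurable fun ω => b ω i := fun i => (measurable_pi_apply i).comp hb_meas
  have hb0 : ∀ ω i, 0 ≤ b ω i := fun ω i => (hb_simplex ω).1 i
  have hb1 : ∀ ω i, b ω i ≤ 1 := by
    intro ω i
    calc b ω i ≤ ∑ j, b ω j := Finset.single_le_sum (fun j _ => hb0 ω j) (Finset.mem_univ i)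
    _ = 1 := (hb_simplex ω).2
  have hint : ∀ i i', Integrable (fun ω => b ω i * b ω i') μ := by
    intro i i'
    refine (integrable_const (1:ℝ)).mono' ((hbm i).mul (hbm i')).aestronglyMeasurable
      (ae_of_all _ fun ω => ?_)
    rw [Real.norm_eq_abs, abs_of_nonneg (mul_nonneg (hb0 ω i) (hb0 ω i'))]
    exact mul_le_one₀ (hb1 ω i) (hb0 ω i') (hb1 ω i')
  rw [Matrix.posDef_iff_dotProduct_mulVec]
  constructor
  · ext i j
    simp only [Matrix.conjTranspose_apply, Matrix.of_apply, star_trivial]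
    exact integral_congr_ae (ae_of_all _ fun ω => mul_comm _ _)
  · intro x hx
    have hstar : star x = x := by simp
    rw [hstar]
    have key : dotProduct x ((Matrix.of fun i i' : Fin C => ∫ ω, b ω i * b ω i' ∂μ).mulVec x)
        = ∫ ω, (∑ i, x i * b ω i)^2 ∂μ := by
      have h1 : ∀ ω, (∑ i, x i * b ω i)^2 = ∑ i, ∑ i', x i * x i' * (b ω i * b ω i') := by
        intro ω
        rw [sq, Finset.sum_mul_sum]
        exact Finset.sum_congr rfl fun i _ => Finset.sum_congr rfl fun i' _ => by ring
      simp_rw [h1]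
      rw [integral_finset_sum _ fun i _ => integrable_finset_sum _
        (fun i' _ => ((hint i i').const_mul _))]
      simp_rw [integral_finset_sum _ fun i' (_ : i' ∈ Finset.univ) => (hint _ i').const_mul _,
        integral_const_mul]
      simp only [dotProduct, Matrix.mulVec, Matrix.of_apply, Finset.mul_sum]
      exact Finset.sum_congr rfl fun i _ => Finset.sum_congr rfl fun i' _ => by ring
    rw [key]
    obtain ⟨i, hxi⟩ : ∃ i, x i ≠ 0 := Function.ne_iff.mp hx
    set K : ℝ := ∑ j, |x j| with hK
    have hKnn : 0 ≤ K := Finset.sum_nonneg fun j _ => abs_nonneg _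
    set ε : ℝ := |x i| / (4 * (K + 1)) with hε
    have hεpos : 0 < ε := div_pos (abs_pos.mpr hxi) (by linarith)
    set A : Set Ωs := {ω | 1 - ε ≤ b ω i} with hA
    have hAm : MeasurableSet A := measurableSet_le measurable_const (hbm i)
    have hμA : 0 < μ A := hpos i ε hεpos
    have hlb : ∀ ω ∈ A, (x i)^2 / 4 ≤ (∑ j, x j * b ω j)^2 := by
      intro ω hω
      have hbi : 1 - ε ≤ b ω i := hω
      -- |∑ x_j b_j - x_i b_i| ≤ K * ε
      have hrest : ∑ j ∈ Finset.univ.erase i, b ω j ≤ ε := by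
        have := (hb_simplex ω).2
        have h := Finset.add_sum_erase Finset.univ (fun j => b ω j) (Finset.mem_univ i)
        have : b ω i + ∑ j ∈ Finset.univ.erase i, b ω j = 1 := by rw [h, (hb_simplex ω).2]
        linarith
      have habs : |∑ j, x j * b ω j - x i * b ω i| ≤ K * ε := by
        rw [← Finset.add_sum_erase Finset.univ (fun j => x j * b ω j) (Finset.mem_univ i)]
        simp only [add_sub_cancel_left]
        calc |∑ j ∈ Finset.univ.erase i, x j * b ω j|
            ≤ ∑ j ∈ Finset.univ.erase i, |x j * b ω j| := Finset.abs_sum_le_sum_abs _ _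
          _ ≤ ∑ j ∈ Finset.univ.erase i, K * b ω j := by
              refine Finset.sum_le_sum fun j _ => ?_
              rw [abs_mul, abs_of_nonneg (hb0 ω j)]
              exact mul_le_mul_of_nonneg_right
                (Finset.single_le_sum (f := fun j => |x j|) (fun j _ => abs_nonneg _)
                  (Finset.mem_univ j)) (hb0 ω j)
          _ = K * ∑ j ∈ Finset.univ.erase i, b ω j := by rw [Finset.mul_sum]
          _ ≤ K * ε := mul_le_mul_of_nonneg_left hrest hKnn
      have hxiK : |x i| ≤ K := Finset.single_le_sum (f := fun j => |x j|)
        (fun j _ => abs_nonneg _) (Finset.mem_univ i)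
      have hKε : (|x i| + K) * ε ≤ |x i| / 2 := by
        have : (|x i| + K) * ε ≤ 2 * (K + 1) * ε := by
          refine mul_le_mul_of_nonneg_right ?_ hεpos.le
          linarith
        rw [hε] at this ⊢
        calc (|x i| + K) * (|x i| / (4 * (K + 1))) ≤ 2 * (K + 1) * (|x i| / (4 * (K + 1))) := this
          _ = |x i| / 2 := by field_simp; ring
      have hgi : |x i| / 2 ≤ |∑ j, x j * b ω j| := by
        have h1 : |x i| * (1 - ε) ≤ |x i * b ω i| := by
          rw [abs_mul, abs_of_nonneg (hb0 ω i)]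
          exact mul_le_mul_of_nonneg_left hbi (abs_nonneg _)
        have h3 := abs_sub_abs_le_abs_sub (x i * b ω i) (∑ j, x j * b ω j)
        rw [abs_sub_comm] at h3
        have e1 : |x i| * (1 - ε) = |x i| - |x i| * ε := by ring
        have e2 : (|x i| + K) * ε = |x i| * ε + K * ε := by ring
        linarith
      calc (x i)^2 / 4 = (|x i| / 2)^2 := by rw [div_pow, sq_abs]; ring
        _ ≤ |∑ j, x j * b ω j|^2 := pow_le_pow_left₀ (by positivity) hgi 2
        _ = (∑ j, x j * b ω j)^2 := sq_abs _
    -- integrability of the square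
    have hg : Integrable (fun ω => (∑ j, x j * b ω j)^2) μ := by
      have : (fun ω => (∑ j, x j * b ω j)^2)
          = fun ω => ∑ j, ∑ j', x j * x j' * (b ω j * b ω j') := by
        funext ω
        rw [sq, Finset.sum_mul_sum]
        exact Finset.sum_congr rfl fun j _ => Finset.sum_congr rfl fun j' _ => by ring
      rw [this]
      exact integrable_finset_sum _ fun j _ => integrable_finset_sum _
        (fun j' _ => (hint j j').const_mul _)
    have hμAfin : μ A ≠ ⊤ := measure_ne_top μ A
    have h1 : (x i)^2 / 4 * (μ A).toReal ≤ ∫ ω in A, (∑ j, x j * b ω j)^2 ∂μ :=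
      by have := setIntegral_ge_of_const_le hAm hμAfin hlb (hg.integrableOn); rw [smul_eq_mul, mul_comm] at this; exact this
    have h2 : ∫ ω in A, (∑ j, x j * b ω j)^2 ∂μ ≤ ∫ ω, (∑ j, x j * b ω j)^2 ∂μ :=
      setIntegral_le_integral hg (ae_of_all _ fun ω => sq_nonneg _)
    have hμAtr : 0 < (μ A).toReal := ENNReal.toReal_pos hμA.ne' hμAfin
    have : 0 < (x i)^2 / 4 * (μ A).toReal :=
      mul_pos (by positivity) hμAtr
    linarith

end GBQL
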